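/- Let R be a commutative ring and let q and t₁ be units in R. Set t = (q−1)t₁(t₁+1) and define polynomials p_n ∈ R[x] recursively by p₀ = 1 and p_n = x·p_{n−1} + t q^{−2n} D_q(p_{n−1}) + q^{−n} p_{n−1} for n ≥ 1. Then for all n ∈ ℕ, p_n = t₁ⁿ q^{−n²} U_n^{(−t₁⁻¹−1)}(qⁿ t₁⁻¹ x; q), where the right-hand side is the polynomial obtained from the Al-Salam–Carlitz I polynomial U_n^{(a)}(X;q) with a = −t₁⁻¹−1 by substituting X = qⁿ t₁⁻¹ x. -/

import Mathlib

noncomputable section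

variable {R : Type*} [CommRing R]

/-- The Gaussian binomial coefficient `binom(n,k)_q`, defined by `binom(n,0)_q = 1`,
`binom(0,k+1)_q = 0` and the `q`-Pascal recursion
`binom(n+1,k+1)_q = binom(n,k)_q + q^(k+1)·binom(n,k+1)_q`. -/
def qbinom (q : R) : ℕ → ℕ → R
  | _, 0 => 1
  | 0, _ + 1 => 0
  | n + 1, k + 1 => qbinom q n k + q ^ (k + 1) * qbinom q n (k + 1)

/-- The Al-Salam–Carlitz I polynomial
`U_n^{(a)}(X;q) = Σ_{k=0}^{n} binom(n,k)_q (−a)^k q^{k(k−1)/2} ∏_{j=0}^{n−k−1}(X − q^j)`. -/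
def alSalamCarlitz (q a : R) (n : ℕ) : Polynomial R :=
  ∑ k ∈ Finset.range (n + 1),
    Polynomial.C (qbinom q n k * (-a) ^ k * q ^ (k * (k - 1) / 2)) *
      ∏ j ∈ Finset.range (n - k), (Polynomial.X - Polynomial.C (q ^ j))

/-- The `q`-derivative `D_q` on `R[x]`, determined by `D_q(xⁿ) = [n]_q x^(n−1)`. -/
def qDeriv (q : R) (p : Polynomial R) : Polynomial R :=
  p.sum fun n c => Polynomial.C (c * ∑ i ∈ Finset.range n, q ^ i) * Polynomial.X ^ (n - 1)

/-- The recursively defined polynomials `p₀ = 1`,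
`p_n = x·p_{n−1} + t q^{−2n} D_q(p_{n−1}) + q^{−n} p_{n−1}` with
`t = (q−1)t₁(t₁+1)`. -/
def pseq (q t₁ : Rˣ) : ℕ → Polynomial R
  | 0 => 1
  | n + 1 =>
      Polynomial.X * pseq q t₁ n +
        Polynomial.C (((q : R) - 1) * (t₁ : R) * ((t₁ : R) + 1) *
            ((q⁻¹ : Rˣ) : R) ^ (2 * (n + 1))) * qDeriv (q : R) (pseq q t₁ n) +
        Polynomial.C (((q⁻¹ : Rˣ) : R) ^ (n + 1)) * pseq q t₁ n

end

namespace ASCAux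

open Polynomial Finset

variable {R : Type*} [CommRing R]

theorem qbinom_eq_zero (q : R) : ∀ n k : ℕ, n < k → qbinom q n k = 0
  | 0, _ + 1, _ => rfl
  | n + 1, k + 1, h => by
    rw [qbinom, qbinom_eq_zero q n k (by omega), qbinom_eq_zero q n (k + 1) (by omega)]
    ring

theorem qDeriv_monomial (q a : R) (n : ℕ) :
    qDeriv q (Polynomial.monomial n a) =
      C (a * ∑ i ∈ Finset.range n, q ^ i) * X ^ (n - 1) := by
  unfold qDeriv
  rw [Polynomial.sum_monomial_index]
  simp

theorem qDeriv_add (q : R) (p r : Polynomial R) :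
    qDeriv q (p + r) = qDeriv q p + qDeriv q r := by
  unfold qDeriv
  rw [Polynomial.sum_add_index] <;> intros <;> simp [add_mul]

theorem qDeriv_zero (q : R) : qDeriv q (0 : Polynomial R) = 0 :=
  Polynomial.sum_zero_index _

theorem qDeriv_C (q a : R) : qDeriv q (C a) = 0 := by
  rw [← Polynomial.monomial_zero_left, qDeriv_monomial]; simp

theorem qDeriv_one (q : R) : qDeriv q (1 : Polynomial R) = 0 := by
  rw [← Polynomial.C_1, qDeriv_C]

theorem qDeriv_C_mul (q a : R) (p : Polynomial R) :
    qDeriv q (C a * p) = C a * qDeriv q p := by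
  induction p using Polynomial.induction_on' with
  | add f g hf hg => rw [mul_add, qDeriv_add, hf, hg, qDeriv_add, mul_add]
  | monomial n b =>
    rw [Polynomial.C_mul_monomial, qDeriv_monomial, qDeriv_monomial]
    rw [← mul_assoc, ← Polynomial.C_mul, ← mul_assoc]

theorem qDeriv_sum (q : R) {ι : Type*} (s : Finset ι) (f : ι → Polynomial R) :
    qDeriv q (∑ i ∈ s, f i) = ∑ i ∈ s, qDeriv q (f i) := by
  classical
  induction s using Finset.induction with
  | empty => simp [qDeriv_zero]
  | insert _ _ h ih => rw [Finset.sum_insert h, Finset.sum_insert h, qDeriv_add, ih]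

theorem qDeriv_X (q : R) : qDeriv q (X : Polynomial R) = 1 := by
  rw [← Polynomial.monomial_one_one_eq_X, qDeriv_monomial]; simp

theorem qDeriv_mul (q : R) (p r : Polynomial R) :
    qDeriv q (p * r) = p.comp (C q * X) * qDeriv q r + qDeriv q p * r := by
  induction p using Polynomial.induction_on' with
  | add f g hf hg =>
    rw [add_mul, qDeriv_add, hf, hg, Polynomial.add_comp, qDeriv_add]; ring
  | monomial n a =>
    induction r using Polynomial.induction_on' with
    | add f g hf hg => rw [mul_add, qDeriv_add, hf, hg, qDeriv_add]; ring
    | monomial m b =>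
      rw [Polynomial.monomial_mul_monomial, qDeriv_monomial, qDeriv_monomial,
        qDeriv_monomial, ← Polynomial.C_mul_X_pow_eq_monomial,
        ← Polynomial.C_mul_X_pow_eq_monomial, Polynomial.C_mul_comp,
        Polynomial.X_pow_comp, mul_pow, ← Polynomial.C_pow,
        Finset.sum_range_add]
      simp_rw [pow_add]
      rw [← Finset.mul_sum]
      match n, m with
      | 0, m => simp; ring
      | n + 1, 0 => simp; ring
      | n + 1, m + 1 =>
        have h1 : n + 1 + (m + 1) - 1 = n + 1 + m := by omega
        rw [h1, Nat.succ_sub_one, Nat.succ_sub_one]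
        simp only [map_mul, map_add, map_pow]
        ring


/-- The composed factor product `∏_{j<m} (c·X − qʲ)`. -/
noncomputable def w (q c : R) (m : ℕ) : Polynomial R :=
  ∏ j ∈ Finset.range m, (C c * X - C (q ^ j))

theorem w_zero (q c : R) : w q c 0 = 1 := by simp [w]

theorem w_succ (q c : R) (m : ℕ) :
    w q c (m + 1) = w q c m * (C c * X - C (q ^ m)) := by
  rw [w, w, Finset.prod_range_succ]

theorem w_comp (q c : R) (m : ℕ) :
    (w q c m).comp (C q * X) = w q (c * q) m := by
  rw [w, w, Polynomial.prod_comp]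
  refine Finset.prod_congr rfl fun j _ => ?_
  simp only [Polynomial.sub_comp, Polynomial.C_mul_comp, Polynomial.X_comp,
    Polynomial.C_comp, map_mul]
  ring

theorem w_shift (q c : R) (m : ℕ) :
    w q (c * q) (m + 1) = C (q ^ m) * (C (c * q) * X - 1) * w q c m := by
  induction m with
  | zero => simp [w_succ, w_zero]
  | succ m ih =>
    rw [w_succ, ih, w_succ q c m]
    have key : (C (q ^ m) : Polynomial R) * (C (c * q) * X - C (q ^ (m + 1))) =
        C (q ^ (m + 1)) * (C c * X - C (q ^ m)) := by
      simp only [map_mul, map_pow]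
      ring
    calc C (q ^ m) * (C (c * q) * X - 1) * w q c m * (C (c * q) * X - C (q ^ (m + 1)))
        = (C (c * q) * X - 1) * w q c m *
            (C (q ^ m) * (C (c * q) * X - C (q ^ (m + 1)))) := by ring
      _ = (C (c * q) * X - 1) * w q c m * (C (q ^ (m + 1)) * (C c * X - C (q ^ m))) := by
          rw [key]
      _ = C (q ^ (m + 1)) * (C (c * q) * X - 1) * (w q c m * (C c * X - C (q ^ m))) := by ring

theorem w_split (q c : R) (m : ℕ) :
    w q (c * q) (m + 1) =
      C (q ^ (m + 1)) * w q c (m + 1) + C ((q ^ (m + 1) - 1) * q ^ m) * w q c m := by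
  rw [w_shift, w_succ]
  have key : (C (q ^ m) : Polynomial R) * (C (c * q) * X - 1) =
      C (q ^ (m + 1)) * (C c * X - C (q ^ m)) + C ((q ^ (m + 1) - 1) * q ^ m) := by
    simp only [map_mul, map_pow, map_sub, map_one]
    ring
  calc C (q ^ m) * (C (c * q) * X - 1) * w q c m
      = (C (q ^ (m + 1)) * (C c * X - C (q ^ m)) + C ((q ^ (m + 1) - 1) * q ^ m)) *
          w q c m := by rw [key]
    _ = _ := by ring

theorem qDeriv_w (q c : R) (m : ℕ) :
    qDeriv q (w q c (m + 1)) = C (c * ∑ i ∈ Finset.range (m + 1), q ^ i) * w q c m := by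
  induction m with
  | zero =>
    rw [w_succ, w_zero, one_mul, pow_zero]
    have : qDeriv q (C c * X - C (1:R)) = C c := by
      rw [sub_eq_add_neg, ← Polynomial.C_neg, qDeriv_add, qDeriv_C, qDeriv_C_mul, qDeriv_X]
      simp
    rw [this]; simp
  | succ m ih =>
    rw [w_succ q c (m + 1), qDeriv_mul, ih, w_comp, w_shift, w_succ q c m]
    have hd : qDeriv q (C c * X - C (q ^ (m + 1))) = C c := by
      rw [sub_eq_add_neg, ← Polynomial.C_neg, qDeriv_add, qDeriv_C, qDeriv_C_mul, qDeriv_X]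
      simp
    rw [hd]
    have hgeom : ((∑ i ∈ Finset.range (m + 1), q ^ i) * (q - 1) : R) = q ^ (m + 1) - 1 :=
      geom_sum_mul q (m + 1)
    have hgeomC : (C ((∑ i ∈ Finset.range (m + 1), q ^ i) * (q - 1)) : Polynomial R) =
        C (q ^ (m + 1) - 1) := by rw [hgeom]
    rw [Finset.sum_range_succ (fun i => q ^ i) (m + 1)]
    simp only [map_mul, map_add, map_pow, map_sub, map_one] at hgeomC ⊢
    linear_combination (-(Polynomial.C c * Polynomial.C q ^ m * w q c m)) * hgeomC


/-- coefficient `binom(n,k)_q (1+b)^k q^{k(k-1)/2}` -/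
def cf (Q b : R) (n k : ℕ) : R := qbinom Q n k * (1 + b) ^ k * Q ^ (k * (k - 1) / 2)

/-- the composed Al-Salam–Carlitz polynomial, written via `w`. -/
noncomputable def Ssum (Q b : R) (n : ℕ) : Polynomial R :=
  ∑ k ∈ Finset.range (n + 1), C (cf Q b n k) * w Q (Q ^ n * b) (n - k)

theorem qbinom_zero (Q : R) (n : ℕ) : qbinom Q n 0 = 1 := by cases n <;> rfl

theorem cf_zero (Q b : R) (n : ℕ) : cf Q b n 0 = 1 := by
  simp [cf, qbinom_zero]

theorem cf_top (Q b : R) (n : ℕ) : cf Q b n (n + 1) = 0 := by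
  simp [cf, qbinom_eq_zero Q n (n + 1) (by omega)]

theorem cf_succ (Q b : R) (n k : ℕ) :
    cf Q b (n + 1) (k + 1) =
      Q ^ k * cf Q b n k * (1 + b) + Q ^ (k + 1) * cf Q b n (k + 1) := by
  have hq : qbinom Q (n + 1) (k + 1) = qbinom Q n k + Q ^ (k + 1) * qbinom Q n (k + 1) := rfl
  have h2 : (k + 1) * ((k + 1) - 1) / 2 = k * (k - 1) / 2 + k := by
    have h3 : (k + 1) * ((k + 1) - 1) = k * (k - 1) + k * 2 := by
      cases k with
      | zero => rfl
      | succ j => simp [Nat.succ_sub_one]; ring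
    generalize hx : k * (k - 1) = x at h3 ⊢
    omega
  rw [cf, cf, cf, hq, h2, pow_add]
  ring

theorem comp_eq (Q b : R) (n : ℕ) :
    (alSalamCarlitz Q (-b - 1) n).comp (C (Q ^ n * b) * X) = Ssum Q b n := by
  rw [alSalamCarlitz, Ssum, Polynomial.comp, Polynomial.eval₂_finset_sum]
  refine Finset.sum_congr rfl fun k _ => ?_
  show (C (qbinom Q n k * (-(-b - 1)) ^ k * Q ^ (k * (k - 1) / 2)) *
      ∏ j ∈ Finset.range (n - k), (X - C (Q ^ j))).comp (C (Q ^ n * b) * X) = _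
  rw [Polynomial.mul_comp, Polynomial.C_comp, Polynomial.prod_comp]
  have hco : (-(-b - 1) : R) = 1 + b := by ring
  rw [hco, cf, w]
  refine congrArg _ (Finset.prod_congr rfl fun j _ => ?_)
  rw [Polynomial.sub_comp, Polynomial.X_comp, Polynomial.C_comp]

theorem pascal_sum (Q b : R) (n : ℕ) :
    Ssum Q b (n + 1) =
      (∑ k ∈ Finset.range (n + 1),
          C (Q ^ k * cf Q b n k) * w Q (Q ^ (n + 1) * b) (n + 1 - k))
        + ∑ k ∈ Finset.range (n + 1),
            C (Q ^ k * cf Q b n k * (1 + b)) * w Q (Q ^ (n + 1) * b) (n - k) := by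
  rw [Ssum, Finset.sum_range_succ']
  have key : ∀ k ∈ Finset.range (n + 1),
      C (cf Q b (n + 1) (k + 1)) * w Q (Q ^ (n + 1) * b) (n + 1 - (k + 1))
        = C (Q ^ k * cf Q b n k * (1 + b)) * w Q (Q ^ (n + 1) * b) (n - k)
          + C (Q ^ (k + 1) * cf Q b n (k + 1)) * w Q (Q ^ (n + 1) * b) (n - k) := by
    intro k _
    rw [show n + 1 - (k + 1) = n - k from by omega, cf_succ, map_add, add_mul]
  rw [Finset.sum_congr rfl key, Finset.sum_add_distrib]
  rw [Finset.sum_range_succ'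
    (f := fun k => C (Q ^ k * cf Q b n k) * w Q (Q ^ (n + 1) * b) (n + 1 - k))]
  have key2 : ∀ k ∈ Finset.range n,
      C (Q ^ (k + 1) * cf Q b n (k + 1)) * w Q (Q ^ (n + 1) * b) (n + 1 - (k + 1))
        = C (Q ^ (k + 1) * cf Q b n (k + 1)) * w Q (Q ^ (n + 1) * b) (n - k) := by
    intro k _; rw [show n + 1 - (k + 1) = n - k from by omega]
  rw [Finset.sum_congr rfl key2]
  rw [Finset.sum_range_succ
    (f := fun k => C (Q ^ (k + 1) * cf Q b n (k + 1)) * w Q (Q ^ (n + 1) * b) (n - k))]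
  rw [cf_top, cf_zero, cf_zero]
  simp only [Nat.sub_zero, pow_zero, mul_one, one_mul, map_zero, zero_mul, add_zero,
    mul_zero, map_one]
  ring

theorem term_split (Q b a : R) (n k : ℕ) (hk : k < n) :
    C (Q ^ k * a * (1 + b)) * w Q (Q ^ (n + 1) * b) (n - k)
      = C (Q ^ n * (1 + b) * a) * w Q (Q ^ n * b) (n - k)
        + C ((1 + b) * a * (Q ^ (n - k) - 1) * Q ^ (n - 1)) * w Q (Q ^ n * b) (n - 1 - k) := by
  have e1 : n - k = (n - 1 - k) + 1 := by omega
  have e2 : (Q : R) ^ (n + 1) * b = (Q ^ n * b) * Q := by ring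
  rw [e1, e2, w_split]
  have p1 : (Q : R) ^ k * Q ^ ((n - 1 - k) + 1) = Q ^ n := by
    rw [← pow_add]; congr 1; omega
  have p2 : (Q : R) ^ k * Q ^ (n - 1 - k) = Q ^ (n - 1) := by
    rw [← pow_add]; congr 1; omega
  have q1 : Q ^ k * a * (1 + b) * Q ^ ((n - 1 - k) + 1) = Q ^ n * (1 + b) * a := by
    linear_combination ((1 + b) * a) * p1
  have q2 : Q ^ k * a * (1 + b) * ((Q ^ ((n - 1 - k) + 1) - 1) * Q ^ (n - 1 - k))
      = (1 + b) * a * (Q ^ ((n - 1 - k) + 1) - 1) * Q ^ (n - 1) := by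
    linear_combination ((1 + b) * a * (Q ^ ((n - 1 - k) + 1) - 1)) * p2
  rw [mul_add, ← mul_assoc, ← map_mul, ← mul_assoc, ← map_mul, q1, q2]

theorem split_sum (Q b : R) (n : ℕ) :
    ∑ k ∈ Finset.range (n + 1),
        C (Q ^ k * cf Q b n k * (1 + b)) * w Q (Q ^ (n + 1) * b) (n - k)
      = (∑ k ∈ Finset.range (n + 1),
            C (Q ^ n * (1 + b) * cf Q b n k) * w Q (Q ^ n * b) (n - k))
        + ∑ k ∈ Finset.range n,
            C ((1 + b) * cf Q b n k * (Q ^ (n - k) - 1) * Q ^ (n - 1)) *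
              w Q (Q ^ n * b) (n - 1 - k) := by
  rw [Finset.sum_range_succ, Finset.sum_range_succ
    (f := fun k => C (Q ^ n * (1 + b) * cf Q b n k) * w Q (Q ^ n * b) (n - k))]
  have hsplit : ∀ k ∈ Finset.range n,
      C (Q ^ k * cf Q b n k * (1 + b)) * w Q (Q ^ (n + 1) * b) (n - k)
        = C (Q ^ n * (1 + b) * cf Q b n k) * w Q (Q ^ n * b) (n - k)
          + C ((1 + b) * cf Q b n k * (Q ^ (n - k) - 1) * Q ^ (n - 1)) *
              w Q (Q ^ n * b) (n - 1 - k) :=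
    fun k hk => term_split Q b (cf Q b n k) n k (Finset.mem_range.mp hk)
  rw [Finset.sum_congr rfl hsplit, Finset.sum_add_distrib, Nat.sub_self, w_zero, w_zero]
  simp only [map_mul, mul_one]
  ring


theorem pow_cancel {Q Q' : R} (hq : Q * Q' = 1) (i : ℕ) : Q ^ i * Q' ^ i = 1 := by
  rw [← mul_pow, hq, one_pow]

theorem term1 (Q Q' b : R) (hq : Q * Q' = 1) (a : R) (n k : ℕ) (hk : k ≤ n) :
    C (b * Q ^ (2 * n + 1)) * ((X + C (Q' ^ (n + 1))) * (C a * w Q (Q ^ n * b) (n - k)))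
      = C (Q ^ k * a) * w Q (Q ^ (n + 1) * b) (n + 1 - k)
        + C (Q ^ n * (1 + b) * a) * w Q (Q ^ n * b) (n - k) := by
  have e1 : n + 1 - k = (n - k) + 1 := by omega
  have e2 : (Q : R) ^ (n + 1) * b = (Q ^ n * b) * Q := by ring
  rw [e1, e2, w_shift]
  have p1 : (Q : R) ^ k * Q ^ (n - k) = Q ^ n := by rw [← pow_add]; congr 1; omega
  have p2 : (Q : R) ^ n * Q ^ n * Q = Q ^ (2 * n + 1) := by
    rw [← pow_add, ← pow_succ]; congr 1; omega
  have p3 : (Q : R) ^ (2 * n + 1) * Q' ^ (n + 1) = Q ^ n := by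
    rw [show 2 * n + 1 = n + (n + 1) from by omega, pow_add, mul_assoc,
      pow_cancel hq, mul_one]
  have s1 : b * Q ^ (2 * n + 1) * a = (Q ^ k * a) * (Q ^ (n - k) * (Q ^ n * b * Q)) := by
    linear_combination (-(a * b)) * p2 + (-(a * b * Q * Q ^ n)) * p1
  have s2 : b * Q ^ (2 * n + 1) * a * Q' ^ (n + 1)
      = Q ^ n * (1 + b) * a - Q ^ k * a * Q ^ (n - k) := by
    linear_combination (a * b) * p3 + a * p1
  calc C (b * Q ^ (2 * n + 1)) * ((X + C (Q' ^ (n + 1))) * (C a * w Q (Q ^ n * b) (n - k)))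
      = C (b * Q ^ (2 * n + 1) * a) * X * w Q (Q ^ n * b) (n - k)
        + C (b * Q ^ (2 * n + 1) * a * Q' ^ (n + 1)) * w Q (Q ^ n * b) (n - k) := by
        simp only [map_mul]; ring
    _ = C ((Q ^ k * a) * (Q ^ (n - k) * (Q ^ n * b * Q))) * X * w Q (Q ^ n * b) (n - k)
        + C (Q ^ n * (1 + b) * a - Q ^ k * a * Q ^ (n - k)) * w Q (Q ^ n * b) (n - k) := by
        rw [s2, s1]
    _ = _ := by simp only [map_mul, map_sub]; ring

theorem term2 (Q Q' b u : R) (hq : Q * Q' = 1) (ht : u * b = 1) (a : R) (n k : ℕ)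
    (hk : k < n) :
    b * Q ^ (2 * n + 1) * ((Q - 1) * u * (u + 1) * Q' ^ (2 * (n + 1))) *
        (a * ((Q ^ n * b) * ∑ i ∈ Finset.range (n - k), Q ^ i))
      = (1 + b) * a * (Q ^ (n - k) - 1) * Q ^ (n - 1) := by
  have hS : (∑ i ∈ Finset.range (n - k), Q ^ i) * (Q - 1) = Q ^ (n - k) - 1 :=
    geom_sum_mul Q (n - k)
  have p1 : (Q : R) ^ (2 * n + 1) * Q ^ n = Q ^ (n - 1) * Q ^ (2 * (n + 1)) := by
    rw [← pow_add, ← pow_add]; congr 1; omega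
  have hc : (Q : R) ^ (2 * (n + 1)) * Q' ^ (2 * (n + 1)) = 1 := pow_cancel hq _
  have hu : b * u * (u + 1) * b = 1 + b := by linear_combination (u * b + b + 1) * ht
  calc b * Q ^ (2 * n + 1) * ((Q - 1) * u * (u + 1) * Q' ^ (2 * (n + 1))) *
          (a * ((Q ^ n * b) * ∑ i ∈ Finset.range (n - k), Q ^ i))
      = (a * ((∑ i ∈ Finset.range (n - k), Q ^ i) * (Q - 1))) * (b * u * (u + 1) * b) *
          ((Q ^ (2 * n + 1) * Q ^ n) * Q' ^ (2 * (n + 1))) := by ring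
    _ = (a * (Q ^ (n - k) - 1)) * (1 + b) *
          ((Q ^ (n - 1) * Q ^ (2 * (n + 1))) * Q' ^ (2 * (n + 1))) := by rw [hS, p1, hu]
    _ = (a * (Q ^ (n - k) - 1)) * (1 + b) *
          (Q ^ (n - 1) * (Q ^ (2 * (n + 1)) * Q' ^ (2 * (n + 1)))) := by ring
    _ = _ := by rw [hc]; ring

theorem qDeriv_Ssum (Q b : R) (n : ℕ) :
    qDeriv Q (Ssum Q b n)
      = ∑ k ∈ Finset.range n,
          C (cf Q b n k * ((Q ^ n * b) * ∑ i ∈ Finset.range (n - k), Q ^ i)) *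
            w Q (Q ^ n * b) (n - 1 - k) := by
  rw [Ssum, qDeriv_sum, Finset.sum_range_succ, Nat.sub_self, w_zero, mul_one, qDeriv_C,
    add_zero]
  refine Finset.sum_congr rfl fun k hk => ?_
  have hk' : k < n := Finset.mem_range.mp hk
  rw [qDeriv_C_mul, show n - k = (n - 1 - k) + 1 from by omega, qDeriv_w,
    ← mul_assoc, ← map_mul]

theorem step (Q Q' b u : R) (hq : Q * Q' = 1) (ht : u * b = 1) (n : ℕ) :
    Ssum Q b (n + 1) =
      C (b * Q ^ (2 * n + 1)) *
        ((X + C (Q' ^ (n + 1))) * Ssum Q b n +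
          C ((Q - 1) * u * (u + 1) * Q' ^ (2 * (n + 1))) * qDeriv Q (Ssum Q b n)) := by
  rw [pascal_sum, split_sum, qDeriv_Ssum, Ssum]
  have hr : C (b * Q ^ (2 * n + 1)) *
        ((X + C (Q' ^ (n + 1))) *
            (∑ k ∈ Finset.range (n + 1), C (cf Q b n k) * w Q (Q ^ n * b) (n - k)) +
          C ((Q - 1) * u * (u + 1) * Q' ^ (2 * (n + 1))) *
            (∑ k ∈ Finset.range n,
              C (cf Q b n k * ((Q ^ n * b) * ∑ i ∈ Finset.range (n - k), Q ^ i)) *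
                w Q (Q ^ n * b) (n - 1 - k)))
      = (∑ k ∈ Finset.range (n + 1),
          C (b * Q ^ (2 * n + 1)) *
            ((X + C (Q' ^ (n + 1))) * (C (cf Q b n k) * w Q (Q ^ n * b) (n - k))))
        + ∑ k ∈ Finset.range n,
            C (b * Q ^ (2 * n + 1)) *
              (C ((Q - 1) * u * (u + 1) * Q' ^ (2 * (n + 1))) *
                (C (cf Q b n k * ((Q ^ n * b) * ∑ i ∈ Finset.range (n - k), Q ^ i)) *
                  w Q (Q ^ n * b) (n - 1 - k))) := by
    rw [mul_add, Finset.mul_sum, Finset.mul_sum, Finset.mul_sum, Finset.mul_sum]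
  rw [hr]
  have h1 : ∀ k ∈ Finset.range (n + 1),
      C (b * Q ^ (2 * n + 1)) *
          ((X + C (Q' ^ (n + 1))) * (C (cf Q b n k) * w Q (Q ^ n * b) (n - k)))
        = C (Q ^ k * cf Q b n k) * w Q (Q ^ (n + 1) * b) (n + 1 - k)
          + C (Q ^ n * (1 + b) * cf Q b n k) * w Q (Q ^ n * b) (n - k) :=
    fun k hk => term1 Q Q' b hq (cf Q b n k) n k
      (by have := Finset.mem_range.mp hk; omega)
  have h2 : ∀ k ∈ Finset.range n,
      C (b * Q ^ (2 * n + 1)) *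
          (C ((Q - 1) * u * (u + 1) * Q' ^ (2 * (n + 1))) *
            (C (cf Q b n k * ((Q ^ n * b) * ∑ i ∈ Finset.range (n - k), Q ^ i)) *
              w Q (Q ^ n * b) (n - 1 - k)))
        = C ((1 + b) * cf Q b n k * (Q ^ (n - k) - 1) * Q ^ (n - 1)) *
            w Q (Q ^ n * b) (n - 1 - k) := by
    intro k hk
    rw [← mul_assoc, ← map_mul, ← mul_assoc, ← map_mul,
      term2 Q Q' b u hq ht (cf Q b n k) n k (Finset.mem_range.mp hk)]
  rw [Finset.sum_congr rfl h1, Finset.sum_add_distrib, Finset.sum_congr rfl h2]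
  ring


end ASCAux

/-- Lemma `lem:A2`: for all `n`, `p_n(x; t, q) = t₁ⁿ q^{−n²} U_n^{(−t₁⁻¹−1)}(qⁿ t₁⁻¹ x; q)`
where `t = (q−1)t₁(t₁+1)`. -/
theorem pseq_eq_alSalamCarlitz {R : Type*} [CommRing R] (q t₁ : Rˣ) (n : ℕ) :
    pseq q t₁ n =
      Polynomial.C ((t₁ : R) ^ n * ((q⁻¹ : Rˣ) : R) ^ (n ^ 2)) *
        (alSalamCarlitz (q : R) (-((t₁⁻¹ : Rˣ) : R) - 1) n).comp
          (Polynomial.C ((q : R) ^ n * ((t₁⁻¹ : Rˣ) : R)) * Polynomial.X) := by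
  open Polynomial ASCAux in
  induction n with
  | zero =>
    rw [ASCAux.comp_eq]
    simp [pseq, ASCAux.Ssum, ASCAux.cf_zero, ASCAux.w_zero]
  | succ n ih =>
    rw [ASCAux.comp_eq] at ih ⊢
    simp only [pseq]
    rw [ih, ASCAux.qDeriv_C_mul,
      ASCAux.step (q : R) ((q⁻¹ : Rˣ) : R) ((t₁⁻¹ : Rˣ) : R) (t₁ : R)
        (Units.mul_inv q) (Units.mul_inv t₁) n]
    have e : (n + 1) ^ 2 = n ^ 2 + (2 * n + 1) := by ring
    have h1 : ((q⁻¹ : Rˣ) : R) ^ ((n + 1) ^ 2)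
        = ((q⁻¹ : Rˣ) : R) ^ (n ^ 2) * ((q⁻¹ : Rˣ) : R) ^ (2 * n + 1) := by
      rw [e, pow_add]
    have h2 : ((q⁻¹ : Rˣ) : R) ^ (2 * n + 1) * (q : R) ^ (2 * n + 1) = 1 :=
      ASCAux.pow_cancel (Units.inv_mul q) _
    have hTT : (t₁ : R) ^ (n + 1) * ((q⁻¹ : Rˣ) : R) ^ ((n + 1) ^ 2) *
        (((t₁⁻¹ : Rˣ) : R) * (q : R) ^ (2 * n + 1))
        = (t₁ : R) ^ n * ((q⁻¹ : Rˣ) : R) ^ (n ^ 2) := by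
      calc (t₁ : R) ^ (n + 1) * ((q⁻¹ : Rˣ) : R) ^ ((n + 1) ^ 2) *
            (((t₁⁻¹ : Rˣ) : R) * (q : R) ^ (2 * n + 1))
          = ((t₁ : R) ^ n * ((q⁻¹ : Rˣ) : R) ^ (n ^ 2)) *
              (((t₁ : R) * ((t₁⁻¹ : Rˣ) : R)) *
                (((q⁻¹ : Rˣ) : R) ^ (2 * n + 1) * (q : R) ^ (2 * n + 1))) := by
            rw [h1]; ring
        _ = _ := by rw [Units.mul_inv, h2]; ring
    have hmerge : (Polynomial.C ((t₁ : R) ^ (n + 1) * ((q⁻¹ : Rˣ) : R) ^ ((n + 1) ^ 2)) *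
        Polynomial.C (((t₁⁻¹ : Rˣ) : R) * (q : R) ^ (2 * n + 1)) : Polynomial R)
        = Polynomial.C ((t₁ : R) ^ n * ((q⁻¹ : Rˣ) : R) ^ (n ^ 2)) := by
      rw [← map_mul, hTT]
    rw [← hmerge]
    ring
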